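/- Let $\mathbf{a} = (a, \alpha) \in \mathbb{H}^n$ (with $a \in \mathbb{C}^n$, $\alpha \in \mathbb{R}$) and $A \in U(n)$ define the isometry $\varphi(z,t) = \mathbf{a} \cdot (Az, t)$ of the Heisenberg group. Suppose $\rho(\varphi(x), x) \le \varepsilon$ for all $x \in \overline{B(0,1)}$, where $\varepsilon < 1/2$. Then $\rho(\mathbf{a}) \le \varepsilon$, $|Az - z| \le 2\varepsilon$ for all $z \in \mathbb{C}^n$ with $|z| \le 1$, and $\rho(\varphi(y), y) \le 5 s \varepsilon$ for all $y \in \overline{B(0,s)}$ and all $s \ge 1$. -/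

import Mathlib

noncomputable section

/-- Group law of `ℍⁿ = ℂⁿ × ℝ`: `(z,t)·(w,s) = (z+w, t+s+2 Im⟨z,w⟩)`. -/
def hMul {n : ℕ} (x y : (Fin n → ℂ) × ℝ) : (Fin n → ℂ) × ℝ :=
  (x.1 + y.1, x.2 + y.2 + 2 * (∑ j, x.1 j * (starRingEnd ℂ) (y.1 j)).im)

/-- Group inverse: `(z,t)⁻¹ = (-z, -t)`. -/
def hInv {n : ℕ} (x : (Fin n → ℂ) × ℝ) : (Fin n → ℂ) × ℝ := (-x.1, -x.2)

/-- Homogeneous norm `ρ(z,t) = (|z|⁴ + t²)^{1/4}`. -/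
def hNorm {n : ℕ} (x : (Fin n → ℂ) × ℝ) : ℝ :=
  ((∑ j, Complex.normSq (x.1 j)) ^ 2 + x.2 ^ 2) ^ ((1 : ℝ) / 4)

/-- Heisenberg distance `ρ(x,y) = ρ(x⁻¹·y)`. -/
def hDist {n : ℕ} (x y : (Fin n → ℂ) × ℝ) : ℝ := hNorm (hMul (hInv x) y)

namespace HeisenbergAux

open Matrix
variable {n : ℕ}

def tE (z : Fin n → ℂ) : EuclideanSpace ℂ (Fin n) := (WithLp.equiv 2 (Fin n → ℂ)).symm z

lemma tE_neg (x : Fin n → ℂ) : tE (-x) = -tE x := rfl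
lemma tE_sub (x y : Fin n → ℂ) : tE (x - y) = tE x - tE y := rfl
lemma tE_smul (c : ℂ) (x : Fin n → ℂ) : tE (c • x) = c • tE x := rfl

lemma norm_tE (z : Fin n → ℂ) : ‖tE z‖ = Real.sqrt (∑ j, Complex.normSq (z j)) := by
  rw [EuclideanSpace.norm_eq]
  congr 1; apply Finset.sum_congr rfl; intro j _
  rw [Complex.normSq_eq_norm_sq]; rfl

lemma sq_norm_tE (z : Fin n → ℂ) : ‖tE z‖ ^ 2 = ∑ j, Complex.normSq (z j) := by
  rw [norm_tE, Real.sq_sqrt]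
  exact Finset.sum_nonneg fun j _ => Complex.normSq_nonneg _

lemma dot_self_eq (v : Fin n → ℂ) :
    star v ⬝ᵥ v = ((∑ j, Complex.normSq (v j) : ℝ) : ℂ) := by
  push_cast
  apply Finset.sum_congr rfl; intro j _
  simp [Pi.star_apply, Complex.normSq_eq_conj_mul_self]

lemma norm_tE_mulVec {A : Matrix (Fin n) (Fin n) ℂ}
    (hA : A ∈ Matrix.unitaryGroup (Fin n) ℂ) (v : Fin n → ℂ) :
    ‖tE (A.mulVec v)‖ = ‖tE v‖ := by
  have hA1 : Aᴴ * A = 1 := by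
    have := hA.1; rwa [Matrix.star_eq_conjTranspose] at this
  have h : star (A.mulVec v) ⬝ᵥ (A.mulVec v) = star v ⬝ᵥ v := by
    rw [Matrix.star_mulVec, Matrix.dotProduct_mulVec, Matrix.vecMul_vecMul, hA1,
      Matrix.vecMul_one]
  rw [dot_self_eq, dot_self_eq] at h
  have h' : (∑ j, Complex.normSq (A.mulVec v j)) = ∑ j, Complex.normSq (v j) :=
    mod_cast h
  rw [norm_tE, norm_tE, h']

lemma hNorm_le_iff4 (p : (Fin n → ℂ) × ℝ) (c : ℝ) (hc : 0 ≤ c) :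
    hNorm p ≤ c ↔ (∑ j, Complex.normSq (p.1 j)) ^ 2 + p.2 ^ 2 ≤ c ^ 4 := by
  set X := (∑ j, Complex.normSq (p.1 j)) ^ 2 + p.2 ^ 2 with hX
  have hX0 : 0 ≤ X := by positivity
  have hpow : hNorm p ^ 4 = X := by
    rw [hNorm, ← Real.rpow_natCast (X ^ ((1:ℝ)/4)) 4, ← Real.rpow_mul hX0]
    norm_num
  constructor
  · intro h
    calc X = hNorm p ^ 4 := hpow.symm
      _ ≤ c ^ 4 := pow_le_pow_left₀ (by rw [hNorm]; positivity) h 4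
  · intro h
    have : hNorm p ^ 4 ≤ c ^ 4 := by rw [hpow]; exact h
    exact le_of_pow_le_pow_left₀ (by norm_num) hc this

lemma hNorm_components {p : (Fin n → ℂ) × ℝ} {c : ℝ} (hc : 0 ≤ c) (h : hNorm p ≤ c) :
    (∑ j, Complex.normSq (p.1 j)) ≤ c ^ 2 ∧ |p.2| ≤ c ^ 2 := by
  rw [hNorm_le_iff4 p c hc] at h
  have h1 : (∑ j, Complex.normSq (p.1 j)) ^ 2 ≤ (c ^ 2) ^ 2 := by nlinarith [sq_nonneg p.2]
  have h2 : p.2 ^ 2 ≤ (c ^ 2) ^ 2 := by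
    nlinarith [sq_nonneg (∑ j, Complex.normSq (p.1 j))]
  refine ⟨le_of_pow_le_pow_left₀ (by norm_num) (by positivity) h1, ?_⟩
  calc |p.2| = Real.sqrt (p.2 ^ 2) := (Real.sqrt_sq_eq_abs _).symm
    _ ≤ Real.sqrt ((c ^ 2) ^ 2) := Real.sqrt_le_sqrt h2
    _ = |c ^ 2| := Real.sqrt_sq_eq_abs _
    _ = c ^ 2 := abs_of_nonneg (by positivity)

def Dv (a1 : Fin n → ℂ) (A : Matrix (Fin n) (Fin n) ℂ) (v : Fin n → ℂ) : Fin n → ℂ :=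
  v - a1 - A.mulVec v

def Sc (x y : Fin n → ℂ) : ℂ := ∑ j, x j * (starRingEnd ℂ) (y j)

def Tv (a : (Fin n → ℂ) × ℝ) (A : Matrix (Fin n) (Fin n) ℂ) (v : Fin n → ℂ) : ℝ :=
  -a.2 - 2 * (Sc a.1 (A.mulVec v)).im - 2 * (Sc a.1 v).im - 2 * (Sc (A.mulVec v) v).im

lemma Sc_zero_right (x : Fin n → ℂ) : Sc x 0 = 0 := by
  unfold Sc; simp

lemma Sc_neg_right (x y : Fin n → ℂ) : Sc x (-y) = -Sc x y := by
  unfold Sc; rw [← Finset.sum_neg_distrib]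
  refine Finset.sum_congr rfl fun j _ => ?_
  simp only [Pi.neg_apply, map_neg]; ring

lemma Sc_neg_left (x y : Fin n → ℂ) : Sc (-x) y = -Sc x y := by
  unfold Sc; rw [← Finset.sum_neg_distrib]
  refine Finset.sum_congr rfl fun j _ => ?_
  simp only [Pi.neg_apply]; ring

lemma Sc_smul_right (c : ℂ) (x y : Fin n → ℂ) :
    Sc x (c • y) = (starRingEnd ℂ) c * Sc x y := by
  unfold Sc; rw [Finset.mul_sum]
  refine Finset.sum_congr rfl fun j _ => ?_
  simp only [Pi.smul_apply, smul_eq_mul, RingHom.map_mul]; ring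

lemma Sc_smul_left (c : ℂ) (x y : Fin n → ℂ) :
    Sc (c • x) y = c * Sc x y := by
  unfold Sc; rw [Finset.mul_sum]
  refine Finset.sum_congr rfl fun j _ => ?_
  simp only [Pi.smul_apply, smul_eq_mul]; ring

lemma abs_im_Sc_le (x y : Fin n → ℂ) : |(Sc x y).im| ≤ ‖tE x‖ * ‖tE y‖ := by
  have hS : Sc x y = inner ℂ (tE y) (tE x) := by
    unfold Sc; rw [PiLp.inner_apply]
    apply Finset.sum_congr rfl; intro j _
    simp [RCLike.inner_apply, tE, mul_comm]
  rw [hS]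
  calc |(inner ℂ (tE y) (tE x) : ℂ).im| ≤ ‖(inner ℂ (tE y) (tE x) : ℂ)‖ :=
        Complex.abs_im_le_norm _
    _ ≤ ‖tE y‖ * ‖tE x‖ := by
        simpa using norm_inner_le_norm (𝕜 := ℂ) (tE y) (tE x)
    _ = ‖tE x‖ * ‖tE y‖ := mul_comm _ _

lemma Tv_neg (a : (Fin n → ℂ) × ℝ) (A : Matrix (Fin n) (Fin n) ℂ) (u : Fin n → ℂ) :
    Tv a A (-u) = -a.2 + 2 * (Sc a.1 (A.mulVec u)).im + 2 * (Sc a.1 u).im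
      - 2 * (Sc (A.mulVec u) u).im := by
  unfold Tv
  rw [Matrix.mulVec_neg, Sc_neg_right, Sc_neg_right, Sc_neg_left, Sc_neg_right, neg_neg]
  simp only [Complex.neg_im]
  ring

lemma Tv_smul (a : (Fin n → ℂ) × ℝ) (A : Matrix (Fin n) (Fin n) ℂ) (s : ℝ)
    (u : Fin n → ℂ) :
    Tv a A ((s : ℂ) • u) = -a.2 - 2 * (s * (Sc a.1 (A.mulVec u)).im)
      - 2 * (s * (Sc a.1 u).im) - 2 * (s ^ 2 * (Sc (A.mulVec u) u).im) := by
  unfold Tv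
  rw [Matrix.mulVec_smul, Sc_smul_right, Sc_smul_right, Sc_smul_left, Sc_smul_right,
    Complex.conj_ofReal]
  have e1 : ∀ w : ℂ, ((s : ℂ) * w).im = s * w.im := by
    intro w; simp [Complex.mul_im]
  have e2 : ((s : ℂ) * ((s : ℂ) * Sc (A.mulVec u) u)).im
      = s ^ 2 * (Sc (A.mulVec u) u).im := by
    rw [e1, e1]; ring
  rw [e1, e1, e2]

lemma hDist_formula (a : (Fin n → ℂ) × ℝ) (A : Matrix (Fin n) (Fin n) ℂ)
    (x : (Fin n → ℂ) × ℝ) :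
    hDist (hMul a (A.mulVec x.1, x.2)) x = hNorm (Dv a.1 A x.1, Tv a A x.1) := by
  have hpair : hMul (hInv (hMul a (A.mulVec x.1, x.2))) x = (Dv a.1 A x.1, Tv a A x.1) := by
    unfold hMul hInv Dv Tv Sc
    dsimp only
    refine Prod.ext ?_ ?_
    · funext j
      simp only [Pi.add_apply, Pi.neg_apply, Pi.sub_apply]
      ring
    · dsimp only
      have e2 : (∑ j, (-(a.1 + A.mulVec x.1)) j * (starRingEnd ℂ) (x.1 j))
          = -(∑ j, (a.1 j + A.mulVec x.1 j) * (starRingEnd ℂ) (x.1 j)) := by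
        rw [← Finset.sum_neg_distrib]
        refine Finset.sum_congr rfl fun j _ => ?_
        simp only [Pi.neg_apply, Pi.add_apply]; ring
      rw [e2, Complex.neg_im]
      have seq : (∑ j, (a.1 j + A.mulVec x.1 j) * (starRingEnd ℂ) (x.1 j)).im
          = (∑ j, a.1 j * (starRingEnd ℂ) (x.1 j)).im
            + (∑ j, A.mulVec x.1 j * (starRingEnd ℂ) (x.1 j)).im := by
        rw [← Complex.add_im, ← Finset.sum_add_distrib]
        congr 1; refine Finset.sum_congr rfl fun j _ => ?_; ring
      rw [seq]; ring
  rw [hDist, hpair]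

lemma hNorm_pair0 (v : Fin n → ℂ) : hNorm ((v, (0:ℝ)) : (Fin n → ℂ) × ℝ) = ‖tE v‖ := by
  have h0 : 0 ≤ ‖tE v‖ := norm_nonneg _
  rw [hNorm]
  dsimp only
  rw [← sq_norm_tE]
  rw [show (‖tE v‖ ^ 2) ^ 2 + (0:ℝ) ^ 2 = ‖tE v‖ ^ 4 by ring]
  rw [← Real.rpow_natCast ‖tE v‖ 4, ← Real.rpow_mul h0]
  norm_num

end HeisenbergAux

open HeisenbergAux Matrix

/-- Lemma: if the isometry `φ = π_𝐚 ∘ φ_A` moves every point of `B(0,1)` by at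
most `ε < 1/2`, then `ρ(𝐚) ≤ ε`, `|Az - z| ≤ 2ε` on the unit ball of `ℂⁿ`, and
`φ` moves every point of `B(0,s)` by at most `5sε` for all `s ≥ 1`. -/
theorem isometry_displacement_on_larger_ball {n : ℕ}
    (a : (Fin n → ℂ) × ℝ) (A : Matrix (Fin n) (Fin n) ℂ)
    (hA : A ∈ Matrix.unitaryGroup (Fin n) ℂ)
    (φ : (Fin n → ℂ) × ℝ → (Fin n → ℂ) × ℝ)
    (hφ : ∀ x : (Fin n → ℂ) × ℝ, φ x = hMul a (A.mulVec x.1, x.2))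
    (ε : ℝ) (hε : ε < 1 / 2) (hε0 : 0 ≤ ε)
    (hclose : ∀ x : (Fin n → ℂ) × ℝ, hNorm x ≤ 1 → hDist (φ x) x ≤ ε) :
    hNorm a ≤ ε ∧
    (∀ z : Fin n → ℂ, Real.sqrt (∑ j, Complex.normSq (z j)) ≤ 1 →
      Real.sqrt (∑ j, Complex.normSq (A.mulVec z j - z j)) ≤ 2 * ε) ∧
    ∀ s : ℝ, 1 ≤ s → ∀ y : (Fin n → ℂ) × ℝ, hNorm y ≤ s →
      hDist (φ y) y ≤ 5 * s * ε := by
  -- basic displacement bounds on the unit ball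
  have hball : ∀ v : Fin n → ℂ, ‖tE v‖ ≤ 1 →
      ‖tE (Dv a.1 A v)‖ ≤ ε ∧ |Tv a A v| ≤ ε ^ 2 := by
    intro v hv
    have h1 : hNorm ((v, (0:ℝ)) : (Fin n → ℂ) × ℝ) ≤ 1 := by
      rw [hNorm_pair0]; exact hv
    have h2 := hclose (v, 0) h1
    rw [hφ, hDist_formula a A (v, 0)] at h2
    have h3 := hNorm_components hε0 h2
    refine ⟨?_, h3.2⟩
    have h4 := h3.1
    rw [← sq_norm_tE] at h4
    exact le_of_pow_le_pow_left₀ two_ne_zero hε0 h4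
  -- part 1 : `hNorm a ≤ ε`
  have hDv0 : Dv a.1 A 0 = -a.1 := by
    funext j; simp [Dv, Matrix.mulVec_zero]
  have hTv0 : Tv a A 0 = -a.2 := by
    unfold Tv
    rw [Matrix.mulVec_zero, Sc_zero_right, Sc_zero_right (0 : Fin n → ℂ)]
    simp
  have part1 : hNorm a ≤ ε := by
    have h1 : hNorm ((0, (0:ℝ)) : (Fin n → ℂ) × ℝ) ≤ 1 := by
      rw [hNorm_pair0]
      have : tE (0 : Fin n → ℂ) = 0 := rfl
      rw [this, norm_zero]; norm_num
    have h2 := hclose (0, 0) h1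
    rw [hφ, hDist_formula a A ((0 : Fin n → ℂ), (0:ℝ))] at h2
    have heq : hNorm (Dv a.1 A (0 : Fin n → ℂ), Tv a A (0 : Fin n → ℂ)) = hNorm a := by
      rw [hDv0, hTv0, hNorm, hNorm]
      dsimp only
      have e1 : (∑ j, Complex.normSq ((-a.1) j)) = ∑ j, Complex.normSq (a.1 j) := by
        apply Finset.sum_congr rfl; intro j _
        simp [Complex.normSq_neg]
      rw [e1, neg_sq]
    rwa [heq] at h2
  have ha1 : ‖tE a.1‖ ≤ ε := by
    have h := (hNorm_components hε0 part1).1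
    rw [← sq_norm_tE] at h
    exact le_of_pow_le_pow_left₀ two_ne_zero hε0 h
  have hα : |a.2| ≤ ε ^ 2 := (hNorm_components hε0 part1).2
  -- part 2
  have part2 : ∀ z : Fin n → ℂ, Real.sqrt (∑ j, Complex.normSq (z j)) ≤ 1 →
      Real.sqrt (∑ j, Complex.normSq (A.mulVec z j - z j)) ≤ 2 * ε := by
    intro z hz
    rw [← norm_tE] at hz
    have hD := (hball z hz).1
    have he : A.mulVec z - z = -(Dv a.1 A z) - a.1 := by
      funext j
      simp only [Dv, Pi.sub_apply, Pi.neg_apply]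
      ring
    have key : ‖tE (A.mulVec z - z)‖ ≤ 2 * ε := by
      rw [he, tE_sub, tE_neg]
      calc ‖-tE (Dv a.1 A z) - tE a.1‖ ≤ ‖-tE (Dv a.1 A z)‖ + ‖tE a.1‖ := norm_sub_le _ _
        _ = ‖tE (Dv a.1 A z)‖ + ‖tE a.1‖ := by rw [norm_neg]
        _ ≤ ε + ε := add_le_add hD ha1
        _ = 2 * ε := by ring
    rw [norm_tE] at key
    calc Real.sqrt (∑ j, Complex.normSq (A.mulVec z j - z j))
        = Real.sqrt (∑ j, Complex.normSq ((A.mulVec z - z) j)) := rfl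
      _ ≤ 2 * ε := key
  refine ⟨part1, part2, ?_⟩
  -- part 3
  intro s hs y hy
  have hs0 : (0:ℝ) < s := lt_of_lt_of_le one_pos hs
  have hsC : (s : ℂ) ≠ 0 := by exact_mod_cast ne_of_gt hs0
  have hz : ‖tE y.1‖ ≤ s := by
    have h := (hNorm_components (le_trans zero_le_one hs) hy).1
    rw [← sq_norm_tE] at h
    exact le_of_pow_le_pow_left₀ two_ne_zero hs0.le h
  set u : Fin n → ℂ := ((s : ℂ))⁻¹ • y.1 with hu
  have hzu : y.1 = (s : ℂ) • u := by
    rw [hu, smul_smul, mul_inv_cancel₀ hsC, one_smul]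
  have hun : ‖tE u‖ ≤ 1 := by
    rw [hu, tE_smul, norm_smul]
    have : ‖((s : ℂ))⁻¹‖ = s⁻¹ := by
      rw [norm_inv, Complex.norm_real, Real.norm_eq_abs, abs_of_pos hs0]
    rw [this]
    calc s⁻¹ * ‖tE y.1‖ ≤ s⁻¹ * s := by
          exact mul_le_mul_of_nonneg_left hz (by positivity)
      _ = 1 := inv_mul_cancel₀ (ne_of_gt hs0)
  obtain ⟨hDu, hTu⟩ := hball u hun
  obtain ⟨_, hTu'⟩ := hball (-u) (by rw [tE_neg, norm_neg]; exact hun)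
  set I1 := (Sc a.1 (A.mulVec u)).im with hI1
  set I2 := (Sc a.1 u).im with hI2
  set Q := (Sc (A.mulVec u) u).im with hQdef
  have hTu_eq : Tv a A u = -a.2 - 2 * I1 - 2 * I2 - 2 * Q := rfl
  have hTun_eq : Tv a A (-u) = -a.2 + 2 * I1 + 2 * I2 - 2 * Q := Tv_neg a A u
  have hTz_eq : Tv a A y.1 = -a.2 - 2 * (s * I1) - 2 * (s * I2) - 2 * (s ^ 2 * Q) := by
    rw [hzu]; exact Tv_smul a A s u
  rw [hTu_eq] at hTu
  rw [hTun_eq] at hTu'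
  -- bound on |Tv y.1|
  have hL : |I1 + I2| ≤ ε ^ 2 / 2 := by
    rw [abs_le] at *
    constructor <;> linarith [hTu.1, hTu.2, hTu'.1, hTu'.2]
  have hQ : |Q| ≤ ε ^ 2 := by
    rw [abs_le] at *
    constructor <;> linarith [hTu.1, hTu.2, hTu'.1, hTu'.2, hα.1, hα.2]
  have hTz : |Tv a A y.1| ≤ 4 * s ^ 2 * ε ^ 2 := by
    have h1 : |(2 * s) * (I1 + I2)| ≤ s * ε ^ 2 := by
      rw [abs_mul, abs_of_pos (by linarith : (0:ℝ) < 2 * s)]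
      calc (2 * s) * |I1 + I2| ≤ (2 * s) * (ε ^ 2 / 2) :=
            mul_le_mul_of_nonneg_left hL (by linarith)
        _ = s * ε ^ 2 := by ring
    have h2 : |(2 * s ^ 2) * Q| ≤ 2 * s ^ 2 * ε ^ 2 := by
      rw [abs_mul, abs_of_pos (by positivity : (0:ℝ) < 2 * s ^ 2)]
      exact mul_le_mul_of_nonneg_left hQ (by positivity)
    have h3 : Tv a A y.1 = -a.2 - (2 * s) * (I1 + I2) - (2 * s ^ 2) * Q := by
      rw [hTz_eq]; ring
    have hs2 : (1:ℝ) ≤ s ^ 2 := by nlinarith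
    have hm1 : ε ^ 2 ≤ s ^ 2 * ε ^ 2 := by
      have h := mul_le_mul_of_nonneg_right hs2 (sq_nonneg ε)
      linarith
    have hm2 : s * ε ^ 2 ≤ s ^ 2 * ε ^ 2 :=
      mul_le_mul_of_nonneg_right (le_self_pow₀ hs two_ne_zero) (sq_nonneg ε)
    rw [h3]
    rw [abs_le] at h1 h2 hα ⊢
    constructor <;> linarith
  -- bound on the vector part
  have hAuu : ‖tE (A.mulVec u - u)‖ ≤ 2 * ε := by
    have he : A.mulVec u - u = -(Dv a.1 A u) - a.1 := by
      funext j
      simp only [Dv, Pi.sub_apply, Pi.neg_apply]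
      ring
    rw [he, tE_sub, tE_neg]
    calc ‖-tE (Dv a.1 A u) - tE a.1‖ ≤ ‖-tE (Dv a.1 A u)‖ + ‖tE a.1‖ := norm_sub_le _ _
      _ = ‖tE (Dv a.1 A u)‖ + ‖tE a.1‖ := by rw [norm_neg]
      _ ≤ ε + ε := add_le_add hDu ha1
      _ = 2 * ε := by ring
  have hAzz : ‖tE (A.mulVec y.1 - y.1)‖ ≤ 2 * ε * s := by
    have he : A.mulVec y.1 - y.1 = (s : ℂ) • (A.mulVec u - u) := by
      rw [hzu, Matrix.mulVec_smul, ← smul_sub]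
    rw [he, tE_smul, norm_smul]
    have hns : ‖(s : ℂ)‖ = s := by
      rw [Complex.norm_real, Real.norm_eq_abs, abs_of_pos hs0]
    rw [hns]
    calc s * ‖tE (A.mulVec u - u)‖ ≤ s * (2 * ε) :=
          mul_le_mul_of_nonneg_left hAuu hs0.le
      _ = 2 * ε * s := by ring
  have hDz : ‖tE (Dv a.1 A y.1)‖ ≤ 3 * s * ε := by
    have he : Dv a.1 A y.1 = -(A.mulVec y.1 - y.1) - a.1 := by
      funext j
      simp only [Dv, Pi.sub_apply, Pi.neg_apply]
      ring
    rw [he, tE_sub, tE_neg]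
    calc ‖-tE (A.mulVec y.1 - y.1) - tE a.1‖
        ≤ ‖-tE (A.mulVec y.1 - y.1)‖ + ‖tE a.1‖ := norm_sub_le _ _
      _ = ‖tE (A.mulVec y.1 - y.1)‖ + ‖tE a.1‖ := by rw [norm_neg]
      _ ≤ 2 * ε * s + ε := add_le_add hAzz ha1
      _ ≤ 3 * s * ε := by nlinarith [hs, hε0]
  -- finish
  rw [hφ, hDist_formula a A y]
  have h5se : (0:ℝ) ≤ 5 * s * ε := by
    have := mul_nonneg (mul_nonneg (by norm_num : (0:ℝ) ≤ 5) hs0.le) hε0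
    linarith
  rw [hNorm_le_iff4 _ _ h5se]
  dsimp only
  have hsum : (∑ j, Complex.normSq (Dv a.1 A y.1 j)) ≤ (3 * s * ε) ^ 2 := by
    rw [← sq_norm_tE]
    exact pow_le_pow_left₀ (norm_nonneg _) hDz 2
  have hsum0 : (0:ℝ) ≤ ∑ j, Complex.normSq (Dv a.1 A y.1 j) :=
    Finset.sum_nonneg fun j _ => Complex.normSq_nonneg _
  have h1 : (∑ j, Complex.normSq (Dv a.1 A y.1 j)) ^ 2 ≤ ((3 * s * ε) ^ 2) ^ 2 :=
    pow_le_pow_left₀ hsum0 hsum 2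
  have h2 : (Tv a A y.1) ^ 2 ≤ (4 * s ^ 2 * ε ^ 2) ^ 2 := by
    rw [← sq_abs]
    exact pow_le_pow_left₀ (abs_nonneg _) hTz 2
  have h3 : ((3 * s * ε) ^ 2) ^ 2 + (4 * s ^ 2 * ε ^ 2) ^ 2 ≤ (5 * s * ε) ^ 4 := by
    have hid : (5 * s * ε) ^ 4
        = ((3 * s * ε) ^ 2) ^ 2 + (4 * s ^ 2 * ε ^ 2) ^ 2 + 528 * (s * ε) ^ 4 := by
      ring
    have h4 : (0:ℝ) ≤ 528 * (s * ε) ^ 4 := by positivity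
    linarith
  linarith

end
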